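/- Let a, ā, c, M̄ > 0 with ā² < c² < 1 < a² and M̄ > 0. Define f₁(s, y) = ā^{2s} y + M̄ (a^{2s} − 1) − c^{2s} y. Then for any fixed y ≥ 0, the function s ↦ f₁(s, y) is quasiconvex on [0, ∞), i.e., its sublevel sets are intervals. Specifically, the derivative of f₁(·, y) changes sign at most once, from negative to positive. -/

import Mathlib

/-- Auxiliary: the function `F` in exponent form. -/
noncomputable def f1F (la lA lc M y : ℝ) : ℝ → ℝ := fun s : ℝ =>
  Real.exp (2 * s * la) * y + M * (Real.exp (2 * s * lA) - 1) -
    Real.exp (2 * s * lc) * y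

/-- Auxiliary: the derivative of `F`. -/
noncomputable def f1D (la lA lc M y : ℝ) : ℝ → ℝ := fun s : ℝ =>
  2 * la * Real.exp (2 * s * la) * y + 2 * lA * M * Real.exp (2 * s * lA) -
    2 * lc * Real.exp (2 * s * lc) * y

/-- Auxiliary: `D s = G s * exp (2 s lc)` with `G` monotone. -/
noncomputable def f1G (la lA lc M y : ℝ) : ℝ → ℝ := fun s : ℝ =>
  2 * la * y * Real.exp (2 * s * (la - lc)) + 2 * lA * M * Real.exp (2 * s * (lA - lc)) -
    2 * lc * y

lemma f1_hasDerivAt_exp (L s : ℝ) :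
    HasDerivAt (fun t : ℝ => Real.exp (2 * t * L)) (2 * L * Real.exp (2 * s * L)) s := by
  have h1 : HasDerivAt (fun t : ℝ => 2 * t * L) (2 * L) s := by
    simpa using ((hasDerivAt_id s).const_mul 2).mul_const L
  have := h1.exp
  convert this using 1
  ring

lemma f1_hasDerivAt (la lA lc M y s : ℝ) :
    HasDerivAt (f1F la lA lc M y) (f1D la lA lc M y s) s := by
  have h := (((f1_hasDerivAt_exp la s).mul_const y).add
      (((f1_hasDerivAt_exp lA s).sub_const 1).const_mul M)).sub
      ((f1_hasDerivAt_exp lc s).mul_const y)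
  refine h.congr_deriv ?_
  simp only [f1D]; ring

lemma f1_deriv (la lA lc M y s : ℝ) :
    deriv (f1F la lA lc M y) s = f1D la lA lc M y s :=
  (f1_hasDerivAt la lA lc M y s).deriv

lemma f1_D_eq_G (la lA lc M y s : ℝ) :
    f1D la lA lc M y s = f1G la lA lc M y s * Real.exp (2 * s * lc) := by
  simp only [f1D, f1G]
  rw [show (2 * s * la) = 2 * s * (la - lc) + 2 * s * lc by ring,
    show (2 * s * lA) = 2 * s * (lA - lc) + 2 * s * lc by ring,
    Real.exp_add, Real.exp_add]
  ring

lemma f1_G_mono (la lA lc M y : ℝ) (h1 : la < lc) (h2 : lc < 0) (h3 : 0 < lA)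
    (hM : 0 < M) (hy : 0 ≤ y) : Monotone (f1G la lA lc M y) := by
  intro s₁ s₂ h
  have e1 : Real.exp (2 * s₂ * (la - lc)) ≤ Real.exp (2 * s₁ * (la - lc)) :=
    Real.exp_le_exp.mpr (by nlinarith)
  have e2 : Real.exp (2 * s₁ * (lA - lc)) ≤ Real.exp (2 * s₂ * (lA - lc)) :=
    Real.exp_le_exp.mpr (by nlinarith)
  have t1 : 2 * la * y * Real.exp (2 * s₁ * (la - lc)) ≤
      2 * la * y * Real.exp (2 * s₂ * (la - lc)) :=
    mul_le_mul_of_nonpos_left e1 (by nlinarith)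
  have t2 : 2 * lA * M * Real.exp (2 * s₁ * (lA - lc)) ≤
      2 * lA * M * Real.exp (2 * s₂ * (lA - lc)) :=
    mul_le_mul_of_nonneg_left e2 (by nlinarith)
  simp only [f1G]
  linarith

lemma f1_sign (la lA lc M y : ℝ) (h1 : la < lc) (h2 : lc < 0) (h3 : 0 < lA)
    (hM : 0 < M) (hy : 0 ≤ y) {s₁ s₂ : ℝ} (h : s₁ ≤ s₂)
    (hs : 0 ≤ f1D la lA lc M y s₁) : 0 ≤ f1D la lA lc M y s₂ := by
  have hg1 : 0 ≤ f1G la lA lc M y s₁ := by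
    by_contra hneg
    push_neg at hneg
    have := f1_D_eq_G la lA lc M y s₁
    nlinarith [Real.exp_pos (2 * s₁ * lc)]
  have hg2 : 0 ≤ f1G la lA lc M y s₂ := le_trans hg1 (f1_G_mono la lA lc M y h1 h2 h3 hM hy h)
  rw [f1_D_eq_G]
  exact mul_nonneg hg2 (Real.exp_pos _).le

lemma f1_key (la lA lc M y : ℝ) (h1 : la < lc) (h2 : lc < 0) (h3 : 0 < lA)
    (hM : 0 < M) (hy : 0 ≤ y) {x z w : ℝ} (hxz : x ≤ z) (hzw : z ≤ w) :
    f1F la lA lc M y z ≤ max (f1F la lA lc M y x) (f1F la lA lc M y w) := by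
  have hdiff : ∀ t : ℝ, DifferentiableAt ℝ (f1F la lA lc M y) t := fun t =>
    (f1_hasDerivAt la lA lc M y t).differentiableAt
  have hcont : Continuous (f1F la lA lc M y) :=
    Differentiable.continuous hdiff
  rcases le_total (f1G la lA lc M y z) 0 with hGz | hGz
  · -- derivative nonpositive on [x, z], so F z ≤ F x
    have hanti : AntitoneOn (f1F la lA lc M y) (Set.Icc x z) := by
      apply antitoneOn_of_deriv_nonpos (convex_Icc x z) hcont.continuousOn
      · exact fun t _ => (hdiff t).differentiableWithinAt
      · intro t ht
        rw [interior_Icc] at ht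
        rw [f1_deriv, f1_D_eq_G]
        have : f1G la lA lc M y t ≤ 0 :=
          le_trans (f1_G_mono la lA lc M y h1 h2 h3 hM hy ht.2.le) hGz
        exact mul_nonpos_of_nonpos_of_nonneg this (Real.exp_pos _).le
    have := hanti (Set.mem_Icc.mpr ⟨le_refl x, hxz⟩) (Set.mem_Icc.mpr ⟨hxz, le_refl z⟩) hxz
    exact le_trans this (le_max_left _ _)
  · -- derivative nonnegative on [z, w], so F z ≤ F w
    have hmono : MonotoneOn (f1F la lA lc M y) (Set.Icc z w) := by
      apply monotoneOn_of_deriv_nonneg (convex_Icc z w) hcont.continuousOn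
      · exact fun t _ => (hdiff t).differentiableWithinAt
      · intro t ht
        rw [interior_Icc] at ht
        rw [f1_deriv, f1_D_eq_G]
        have : 0 ≤ f1G la lA lc M y t :=
          le_trans hGz (f1_G_mono la lA lc M y h1 h2 h3 hM hy ht.1.le)
        exact mul_nonneg this (Real.exp_pos _).le
    have := hmono (Set.mem_Icc.mpr ⟨le_refl z, hzw⟩) (Set.mem_Icc.mpr ⟨hzw, le_refl w⟩) hzw
    exact le_trans this (le_max_right _ _)

/-- `f₁(s,y) = ā^{2s} y + M̄(a^{2s}-1) - c^{2s} y` is quasiconvex in `s` on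
`[0,∞)`, and its derivative changes sign at most once, from negative to positive. -/
theorem f1_quasiconvex (a abar c M : ℝ)
    (ha : 0 < a) (habar : 0 < abar) (hc : 0 < c) (hM : 0 < M)
    (h1 : abar ^ 2 < c ^ 2) (h2 : c ^ 2 < 1) (h3 : 1 < a ^ 2)
    (y : ℝ) (hy : 0 ≤ y) :
    QuasiconvexOn ℝ (Set.Ici (0 : ℝ))
      (fun s : ℝ =>
        Real.exp (2 * s * Real.log abar) * y + M * (Real.exp (2 * s * Real.log a) - 1) -
          Real.exp (2 * s * Real.log c) * y) ∧
    ∀ s₁ s₂ : ℝ, 0 ≤ s₁ → s₁ ≤ s₂ →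
      0 ≤ deriv (fun s : ℝ =>
          Real.exp (2 * s * Real.log abar) * y + M * (Real.exp (2 * s * Real.log a) - 1) -
            Real.exp (2 * s * Real.log c) * y) s₁ →
      0 ≤ deriv (fun s : ℝ =>
          Real.exp (2 * s * Real.log abar) * y + M * (Real.exp (2 * s * Real.log a) - 1) -
            Real.exp (2 * s * Real.log c) * y) s₂ := by
  have habc : abar < c := by nlinarith
  have hc1 : c < 1 := by nlinarith
  have ha1 : 1 < a := by nlinarith
  have hla : Real.log abar < Real.log c := Real.log_lt_log habar habc
  have hlc : Real.log c < 0 := Real.log_neg hc hc1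
  have hlA : 0 < Real.log a := Real.log_pos ha1
  have hFeq : (fun s : ℝ =>
      Real.exp (2 * s * Real.log abar) * y + M * (Real.exp (2 * s * Real.log a) - 1) -
        Real.exp (2 * s * Real.log c) * y) = f1F (Real.log abar) (Real.log a) (Real.log c) M y :=
    rfl
  rw [hFeq]
  constructor
  · intro b
    intro p hp q hq u v hu hv huv
    simp only [Set.mem_sep_iff, Set.mem_Ici] at hp hq ⊢
    simp only [smul_eq_mul]
    have hz0 : (0 : ℝ) ≤ u * p + v * q := add_nonneg (mul_nonneg hu hp.1) (mul_nonneg hv hq.1)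
    refine ⟨hz0, ?_⟩
    rcases le_total p q with hpq | hpq
    · have hl : p ≤ u * p + v * q := by nlinarith
      have hr : u * p + v * q ≤ q := by nlinarith
      have := f1_key (Real.log abar) (Real.log a) (Real.log c) M y hla hlc hlA hM hy hl hr
      exact le_trans this (max_le hp.2 hq.2)
    · have hl : q ≤ u * p + v * q := by nlinarith
      have hr : u * p + v * q ≤ p := by nlinarith
      have := f1_key (Real.log abar) (Real.log a) (Real.log c) M y hla hlc hlA hM hy hl hr
      exact le_trans this (max_le hq.2 hp.2)
  · intro s₁ s₂ _ h12 hd1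
    rw [f1_deriv] at hd1 ⊢
    exact f1_sign (Real.log abar) (Real.log a) (Real.log c) M y hla hlc hlA hM hy h12 hd1
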